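/- For every α > 0, c₁(α) ≥ e^{−α²/2} > 0, where c₁(α) = (2/√π)·∫_{−b₀(α)}^{b₀(α)} e^{−x²}·cos(√2·x·α) dx − e^{−α²/2} and b₀(α) = π/(2√2·α). In particular, with the optimal binning the homodyne interference coefficient c₁ is strictly positive, since ∫_{−b₀}^{b₀} e^{−x²} cos(√2 x α) dx ≥ ∫_{−∞}^{∞} e^{−x²} cos(√2 x α) dx = √π·e^{−α²/2}. -/

import Mathlib

open Real MeasureTheory Set Filter

/-- Optimal homodyne binning parameter `b₀(α) = π / (2√2 α)`. -/
noncomputable def b0 (α : ℝ) : ℝ := π / (2 * Real.sqrt 2 * α)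

/-- Homodyne interference coefficient at perfect transmission:
`c₁(α) = (2/√π)·∫_{−b₀}^{b₀} e^{−x²} cos(√2 x α) dx − e^{−α²/2}`. -/
noncomputable def c1 (α : ℝ) : ℝ :=
  (2 / Real.sqrt π) *
      (∫ x in (-b0 α)..(b0 α), Real.exp (-x ^ 2) * Real.cos (Real.sqrt 2 * x * α))
    - Real.exp (-α ^ 2 / 2)

/-- The Gaussian–cosine integral over the whole line. -/
lemma gauss_cos (c : ℝ) :
    ∫ x : ℝ, Real.exp (-x ^ 2) * Real.cos (c * x) = Real.sqrt π * Real.exp (-c ^ 2 / 4) := by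
  have hb : (-1 : ℂ).re < 0 := by norm_num
  have h := integral_cexp_quadratic hb ((c : ℂ) * Complex.I) 0
  have hint := integrable_cexp_quadratic' hb ((c : ℂ) * Complex.I) 0
  have hre : ∀ x : ℝ,
      (Complex.exp ((-1 : ℂ) * (x : ℂ) ^ 2 + ((c : ℂ) * Complex.I) * (x : ℂ) + 0)).re
        = Real.exp (-x ^ 2) * Real.cos (c * x) := by
    intro x
    rw [Complex.exp_re]
    congr 1
    · congr 1
      simp
      norm_cast
    · congr 1
      simp
      norm_cast
  have h2 := _root_.integral_re hint
  simp only [RCLike.re_to_complex] at h2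
  have hL : (∫ x : ℝ, Real.exp (-x ^ 2) * Real.cos (c * x))
      = (∫ x : ℝ, Complex.exp ((-1 : ℂ) * (x : ℂ) ^ 2 + ((c : ℂ) * Complex.I) * (x : ℂ) + 0)).re := by
    rw [← h2]
    exact MeasureTheory.integral_congr_ae (Filter.Eventually.of_forall fun x => (hre x).symm)
  rw [hL, h]
  have hexp : (0 : ℂ) - ((c : ℂ) * Complex.I) ^ 2 / (4 * (-1 : ℂ)) = ((-c ^ 2 / 4 : ℝ) : ℂ) := by
    push_cast
    rw [mul_pow, Complex.I_sq]
    ring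
  have hpow : ((π : ℂ) / -(-1 : ℂ)) ^ (1 / 2 : ℂ) = ((Real.sqrt π : ℝ) : ℂ) := by
    rw [show ((π : ℂ) / -(-1 : ℂ)) = ((π : ℝ) : ℂ) by norm_num]
    rw [show ((1 / 2 : ℂ)) = (((1 / 2 : ℝ) : ℂ)) by norm_num]
    rw [← Complex.ofReal_cpow Real.pi_pos.le]
    norm_cast
    rw [Real.sqrt_eq_rpow]
  rw [hexp, hpow, ← Complex.ofReal_exp, ← Complex.ofReal_mul, Complex.ofReal_re]

lemma exp_neg_sq_tendsto : Tendsto (fun x : ℝ => Real.exp (-x ^ 2)) atTop (nhds 0) := by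
  apply Real.tendsto_exp_atBot.comp
  apply tendsto_neg_atBot_iff.mpr
  exact tendsto_pow_atTop (by norm_num)

lemma tail_nonpos {ω b : ℝ} (hω : 0 < ω) (hb : 0 < b) (hwb : ω * b = π / 2) :
    ∫ x in Ioi b, Real.exp (-x ^ 2) * Real.cos (ω * x) ≤ 0 := by
  -- integrability facts
  have hg : Integrable (fun x : ℝ => Real.exp (-x ^ 2) * Real.cos (ω * x)) := by
    refine (integrable_exp_neg_mul_sq one_pos).mono' ?_ ?_
    · exact ((Real.continuous_exp.comp (continuous_pow 2).neg).mul
        (Real.continuous_cos.comp (continuous_const.mul continuous_id))).aestronglyMeasurable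
    · refine Filter.Eventually.of_forall fun x => ?_
      rw [show (-1:ℝ) * x ^ 2 = -x ^ 2 by ring]
      calc ‖Real.exp (-x ^ 2) * Real.cos (ω * x)‖
          = Real.exp (-x ^ 2) * |Real.cos (ω * x)| := by
            rw [norm_mul, Real.norm_eq_abs, Real.norm_eq_abs, abs_of_pos (Real.exp_pos _)]
        _ ≤ Real.exp (-x ^ 2) * 1 := by
            exact mul_le_mul_of_nonneg_left (Real.abs_cos_le_one _) (Real.exp_pos _).le
        _ = Real.exp (-x ^ 2) := mul_one _
  have hh : Integrable (fun x : ℝ => 2 * x * Real.exp (-x ^ 2) * Real.sin (ω * x) / ω) := by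
    have base := (integrable_mul_exp_neg_mul_sq one_pos).norm.const_mul (2 / ω)
    refine base.mono' ?_ ?_
    · exact (((continuous_const.mul continuous_id).mul
        (Real.continuous_exp.comp (continuous_pow 2).neg)).mul
        (Real.continuous_sin.comp (continuous_const.mul continuous_id))).div_const
        ω |>.aestronglyMeasurable
    · refine Filter.Eventually.of_forall fun x => ?_
      rw [show (-1:ℝ) * x ^ 2 = -x ^ 2 by ring]
      have h1 : ‖2 * x * Real.exp (-x ^ 2) * Real.sin (ω * x) / ω‖
          = 2 / ω * |x * Real.exp (-x ^ 2)| * |Real.sin (ω * x)| := by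
        simp [Real.norm_eq_abs, abs_div, abs_mul, abs_of_pos hω, abs_of_pos (Real.exp_pos _),
          abs_two]
        ring
      rw [h1, Real.norm_eq_abs]
      have h3 : (0:ℝ) ≤ 2 / ω * |x * Real.exp (-x ^ 2)| := by positivity
      calc 2 / ω * |x * Real.exp (-x ^ 2)| * |Real.sin (ω * x)|
          ≤ 2 / ω * |x * Real.exp (-x ^ 2)| * 1 :=
            mul_le_mul_of_nonneg_left (abs_sin_le_one (ω * x)) h3
        _ = 2 / ω * |x * Real.exp (-x ^ 2)| := mul_one _
  -- F = e^{-x²} sin(ωx)/ω, F' = g - h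
  have hF : ∀ x : ℝ, HasDerivAt (fun y => Real.exp (-y ^ 2) * Real.sin (ω * y) / ω)
      (Real.exp (-x ^ 2) * Real.cos (ω * x)
        - 2 * x * Real.exp (-x ^ 2) * Real.sin (ω * x) / ω) x := by
    intro x
    have d0 : HasDerivAt (fun y : ℝ => -y ^ 2) (-(2 * x)) x := by
      simpa using ((hasDerivAt_pow 2 x).fun_neg)
    have d1 : HasDerivAt (fun y : ℝ => Real.exp (-y ^ 2))
        (Real.exp (-x ^ 2) * (-(2 * x))) x := (Real.hasDerivAt_exp _).comp x d0
    have d2 : HasDerivAt (fun y : ℝ => Real.sin (ω * y)) (Real.cos (ω * x) * ω) x := by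
      have := (Real.hasDerivAt_sin (ω * x)).comp x ((hasDerivAt_id x).const_mul ω)
      exact this.congr_deriv (by ring)
    have := (d1.fun_mul d2).div_const ω
    refine this.congr_deriv ?_
    beta_reduce
    field_simp
    ring
  have hFlim : Tendsto (fun x : ℝ => Real.exp (-x ^ 2) * Real.sin (ω * x) / ω) atTop (nhds 0) := by
    refine squeeze_zero_norm (a := fun x => Real.exp (-x ^ 2) / ω) (fun x => ?_) ?_
    · rw [Real.norm_eq_abs, abs_div, abs_mul, abs_of_pos hω, abs_of_pos (Real.exp_pos _)]
      exact div_le_div_of_nonneg_right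
        (mul_le_of_le_one_right (Real.exp_pos _).le (abs_sin_le_one _)) hω.le
    · simpa using exp_neg_sq_tendsto.div_const ω
  have hint1 : IntegrableOn (fun x : ℝ => Real.exp (-x ^ 2) * Real.cos (ω * x)
      - 2 * x * Real.exp (-x ^ 2) * Real.sin (ω * x) / ω) (Ioi b) :=
    (hg.sub hh).integrableOn
  have key := integral_Ioi_of_hasDerivAt_of_tendsto' (fun x _ => hF x) hint1 hFlim
  have hsin : Real.sin (ω * b) = 1 := by rw [hwb, Real.sin_pi_div_two]
  rw [hsin] at key
  -- exact value of ∫_{Ioi b} 2 x e^{-x²}/ω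
  have hG : ∀ x : ℝ, HasDerivAt (fun y => -Real.exp (-y ^ 2) / ω)
      (2 * x * Real.exp (-x ^ 2) / ω) x := by
    intro x
    have d0 : HasDerivAt (fun y : ℝ => -y ^ 2) (-(2 * x)) x := by
      simpa using ((hasDerivAt_pow 2 x).fun_neg)
    have d1 : HasDerivAt (fun y : ℝ => Real.exp (-y ^ 2))
        (Real.exp (-x ^ 2) * (-(2 * x))) x := (Real.hasDerivAt_exp _).comp x d0
    have := (d1.fun_neg).div_const ω
    refine this.congr_deriv ?_
    ring
  have hhint : Integrable (fun x : ℝ => 2 * x * Real.exp (-x ^ 2) / ω) := by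
    have := ((integrable_mul_exp_neg_mul_sq one_pos).const_mul 2).div_const ω
    refine this.congr (Filter.Eventually.of_forall fun x => ?_)
    simp only
    rw [show (-1:ℝ) * x ^ 2 = -x ^ 2 by ring]
    ring
  have hGlim : Tendsto (fun x : ℝ => -Real.exp (-x ^ 2) / ω) atTop (nhds 0) := by
    simpa using (exp_neg_sq_tendsto.neg.div_const ω)
  have key2 := integral_Ioi_of_hasDerivAt_of_tendsto' (a := b) (fun x _ => hG x)
    hhint.integrableOn hGlim
  -- comparison of the sine tail integral
  have hcomp : ∫ x in Ioi b, 2 * x * Real.exp (-x ^ 2) * Real.sin (ω * x) / ω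
      ≤ ∫ x in Ioi b, 2 * x * Real.exp (-x ^ 2) / ω := by
    refine setIntegral_mono_on hh.integrableOn hhint.integrableOn measurableSet_Ioi ?_
    intro x hx
    have hx0 : 0 < x := hb.trans hx
    have h0 : (0:ℝ) ≤ 2 * x * Real.exp (-x ^ 2) / ω := by positivity
    calc 2 * x * Real.exp (-x ^ 2) * Real.sin (ω * x) / ω
        = (2 * x * Real.exp (-x ^ 2) / ω) * Real.sin (ω * x) := by ring
      _ ≤ (2 * x * Real.exp (-x ^ 2) / ω) * 1 :=
        mul_le_mul_of_nonneg_left (Real.sin_le_one _) h0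
      _ = 2 * x * Real.exp (-x ^ 2) / ω := mul_one _
  -- assemble
  have hsub : ∫ x in Ioi b, (Real.exp (-x ^ 2) * Real.cos (ω * x)
        - 2 * x * Real.exp (-x ^ 2) * Real.sin (ω * x) / ω)
      = (∫ x in Ioi b, Real.exp (-x ^ 2) * Real.cos (ω * x))
        - ∫ x in Ioi b, 2 * x * Real.exp (-x ^ 2) * Real.sin (ω * x) / ω :=
    integral_sub hg.integrableOn hh.integrableOn
  rw [hsub, mul_one] at key
  have h0 : (0:ℝ) - -Real.exp (-b ^ 2) / ω = Real.exp (-b ^ 2) / ω := by ring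
  rw [h0] at key2
  linarith [hcomp, key, key2]

lemma interval_ge {ω b : ℝ} (hω : 0 < ω) (hb : 0 < b) (hwb : ω * b = π / 2) :
    Real.sqrt π * Real.exp (-ω ^ 2 / 4)
      ≤ ∫ x in (-b)..b, Real.exp (-x ^ 2) * Real.cos (ω * x) := by
  have hg : Integrable (fun x : ℝ => Real.exp (-x ^ 2) * Real.cos (ω * x)) := by
    refine (integrable_exp_neg_mul_sq one_pos).mono' ?_ ?_
    · exact ((Real.continuous_exp.comp (continuous_pow 2).neg).mul
        (Real.continuous_cos.comp (continuous_const.mul continuous_id))).aestronglyMeasurable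
    · refine Filter.Eventually.of_forall fun x => ?_
      rw [show (-1:ℝ) * x ^ 2 = -x ^ 2 by ring, Real.norm_eq_abs, abs_mul,
        abs_of_pos (Real.exp_pos _)]
      exact mul_le_of_le_one_right (Real.exp_pos _).le (abs_cos_le_one _)
  have hfull : ∫ x : ℝ, Real.exp (-x ^ 2) * Real.cos (ω * x)
      = Real.sqrt π * Real.exp (-ω ^ 2 / 4) := gauss_cos ω
  have hIic : ∫ x in Iic (-b), Real.exp (-x ^ 2) * Real.cos (ω * x)
      = ∫ x in Ioi b, Real.exp (-x ^ 2) * Real.cos (ω * x) := by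
    rw [← integral_comp_neg_Ioi]
    apply MeasureTheory.integral_congr_ae
    refine Filter.Eventually.of_forall fun x => ?_
    simp [neg_sq, mul_neg, Real.cos_neg]
  have hadd : (∫ x in Iic b, Real.exp (-x ^ 2) * Real.cos (ω * x))
      + ∫ x in Ioi b, Real.exp (-x ^ 2) * Real.cos (ω * x)
      = ∫ x : ℝ, Real.exp (-x ^ 2) * Real.cos (ω * x) :=
    intervalIntegral.integral_Iic_add_Ioi hg.integrableOn hg.integrableOn
  have hsub : (∫ x in Iic b, Real.exp (-x ^ 2) * Real.cos (ω * x))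
      - ∫ x in Iic (-b), Real.exp (-x ^ 2) * Real.cos (ω * x)
      = ∫ x in (-b)..b, Real.exp (-x ^ 2) * Real.cos (ω * x) :=
    intervalIntegral.integral_Iic_sub_Iic hg.integrableOn hg.integrableOn
  have htail := tail_nonpos hω hb hwb
  linarith

/-- For every `α > 0`, `c₁(α) ≥ e^{−α²/2} > 0`; in particular, with the optimal binning the
homodyne interference coefficient `c₁` is strictly positive. -/
theorem c1_positive (α : ℝ) (hα : 0 < α) :
    Real.exp (-α ^ 2 / 2) ≤ c1 α ∧ 0 < Real.exp (-α ^ 2 / 2) ∧ 0 < c1 α := by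
  have h2 : (0:ℝ) < Real.sqrt 2 := Real.sqrt_pos.mpr (by norm_num)
  have hω : 0 < Real.sqrt 2 * α := mul_pos h2 hα
  have hb : 0 < b0 α := by unfold b0; positivity
  have hwb : (Real.sqrt 2 * α) * b0 α = π / 2 := by
    unfold b0
    field_simp
  have hkey := interval_ge hω hb hwb
  have hii : (∫ x in (-b0 α)..(b0 α), Real.exp (-x ^ 2) * Real.cos (Real.sqrt 2 * x * α))
      = ∫ x in (-b0 α)..(b0 α), Real.exp (-x ^ 2) * Real.cos ((Real.sqrt 2 * α) * x) := by
    apply intervalIntegral.integral_congr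
    intro x _
    simp only
    rw [show Real.sqrt 2 * x * α = (Real.sqrt 2 * α) * x by ring]
  have hexp : -(Real.sqrt 2 * α) ^ 2 / 4 = -α ^ 2 / 2 := by
    rw [mul_pow, Real.sq_sqrt (by norm_num : (0:ℝ) ≤ 2)]
    ring
  rw [hexp] at hkey
  have hsπ : 0 < Real.sqrt π := Real.sqrt_pos.mpr Real.pi_pos
  have hmain : Real.exp (-α ^ 2 / 2) ≤ c1 α := by
    unfold c1
    rw [hii]
    have h1 : (2 / Real.sqrt π) * (Real.sqrt π * Real.exp (-α ^ 2 / 2))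
        ≤ (2 / Real.sqrt π) * ∫ x in (-b0 α)..(b0 α),
            Real.exp (-x ^ 2) * Real.cos ((Real.sqrt 2 * α) * x) :=
      mul_le_mul_of_nonneg_left hkey (by positivity)
    have h2' : (2 / Real.sqrt π) * (Real.sqrt π * Real.exp (-α ^ 2 / 2))
        = 2 * Real.exp (-α ^ 2 / 2) := by
      field_simp
    linarith
  exact ⟨hmain, Real.exp_pos _, lt_of_lt_of_le (Real.exp_pos _) hmain⟩
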